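/- Let p be a prime, n, m positive integers, and F : 𝔽_p^n → 𝔽_p^m any function. For each β ∈ 𝔽_p^m one has p^{n−m} − sqrt((1 − p^{−m})·Nb_F) ≤ |F⁻¹(β)| ≤ p^{n−m} + sqrt((1 − p^{−m})·Nb_F). Moreover, if some β attains one of these two bounds with equality, then |F⁻¹(α)| = (p^n − |F⁻¹(β)|)/(p^m − 1) for every α ∈ 𝔽_p^m with α ≠ β. -/

import Mathlib

open Finset

/-- The Walsh transform of `F : 𝔽_p^n → 𝔽_p^m` at `(b, a)`. -/
noncomputable def walsh (p n m : ℕ) [NeZero p] (F : (Fin n → ZMod p) → (Fin m → ZMod p))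
    (b : Fin m → ZMod p) (a : Fin n → ZMod p) : ℂ :=
  ∑ x : Fin n → ZMod p,
    Complex.exp (2 * Real.pi * Complex.I *
      ((((∑ i, b i * F x i) - ∑ i, a i * x i).val : ℤ) : ℂ) / p)

/-- The imbalance `Nb_F = p^{-m} ∑_{b ≠ 0} |W_F(b,0)|²`. -/
noncomputable def imbalance (p n m : ℕ) [NeZero p]
    (F : (Fin n → ZMod p) → (Fin m → ZMod p)) : ℝ :=
  ((p : ℝ) ^ m)⁻¹ *
    ∑ b ∈ univ.filter (fun b : Fin m → ZMod p => b ≠ 0),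
      ‖walsh p n m F b 0‖ ^ 2

/-- The size of the preimage set `F⁻¹(β)`. -/
def fiberCard (p n m : ℕ) [NeZero p] (F : (Fin n → ZMod p) → (Fin m → ZMod p))
    (β : Fin m → ZMod p) : ℕ :=
  (univ.filter fun x => F x = β).card

lemma walsh_zero_eq (p n m : ℕ) [NeZero p] (F : (Fin n → ZMod p) → (Fin m → ZMod p))
    (b : Fin m → ZMod p) :
    walsh p n m F b 0 = ∑ x : Fin n → ZMod p, ZMod.stdAddChar (∑ i, b i * F x i) := by
  unfold walsh
  simp only [Pi.zero_apply, zero_mul, Finset.sum_const_zero, sub_zero]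
  refine Finset.sum_congr rfl fun x _ => ?_
  rw [ZMod.stdAddChar_apply, ZMod.toCircle_apply]
  push_cast
  ring_nf

lemma sum_char_vec {p m : ℕ} [NeZero p] (y : Fin m → ZMod p) :
    ∑ b : Fin m → ZMod p, ZMod.stdAddChar (∑ i, b i * y i)
      = if y = 0 then ((p ^ m : ℕ) : ℂ) else 0 := by
  classical
  let φ : (Fin m → ZMod p) →+ ZMod p :=
    AddMonoidHom.mk' (fun b => ∑ i, b i * y i)
      (fun a b => by simp [add_mul, Finset.sum_add_distrib])
  let ψ : AddChar (Fin m → ZMod p) ℂ := (ZMod.stdAddChar (N := p)).compAddMonoidHom φ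
  have hψ : ∀ b, ψ b = ZMod.stdAddChar (∑ i, b i * y i) := fun b => rfl
  have hcard : (Fintype.card (Fin m → ZMod p)) = p ^ m := by
    simp [ZMod.card]
  have hsum := AddChar.sum_eq_ite ψ
  have hiff : ψ = 0 ↔ y = 0 := by
    constructor
    · intro h
      by_contra hy
      obtain ⟨i, hi⟩ := Function.ne_iff.1 hy
      have h1 : ψ ((Pi.single i 1 : Fin m → ZMod p)) = 1 := by rw [h]; simp
      rw [hψ] at h1
      have h2 : (∑ j, (Pi.single i 1 : Fin m → ZMod p) j * y j) = y i := by
        rw [Finset.sum_eq_single i] <;> simp +contextual [Pi.single_apply]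
      rw [h2] at h1
      apply hi
      have := ZMod.injective_toCircle (N := p)
      have h3 : ZMod.toCircle (y i) = ZMod.toCircle (0 : ZMod p) := by
        apply Circle.coe_injective
        rw [← ZMod.stdAddChar_apply, h1]
        simp [ZMod.stdAddChar_apply]
      exact this h3
    · intro h
      ext b
      simp [hψ, h]
  rw [show (∑ b : Fin m → ZMod p, ZMod.stdAddChar (∑ i, b i * y i)) = ∑ b, ψ b from rfl, hsum]
  simp only [hiff, hcard]

lemma conj_stdAddChar {p : ℕ} [NeZero p] (z : ZMod p) :
    (starRingEnd ℂ) (ZMod.stdAddChar z) = ZMod.stdAddChar (-z) := by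
  rw [ZMod.stdAddChar_apply, ZMod.stdAddChar_apply, AddChar.map_neg_eq_inv,
    Circle.coe_inv_eq_conj]

lemma pairs_eq (p n m : ℕ) [NeZero p] (F : (Fin n → ZMod p) → (Fin m → ZMod p)) :
    ∑ x : Fin n → ZMod p, ∑ x' : Fin n → ZMod p, (if F x' = F x then (1:ℂ) else 0)
      = ∑ β : Fin m → ZMod p, (fiberCard p n m F β : ℂ) ^ 2 := by
  classical
  have h1 : ∀ v : Fin m → ZMod p,
      ∑ x' : Fin n → ZMod p, (if F x' = v then (1:ℂ) else 0) = (fiberCard p n m F v : ℂ) := by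
    intro v
    simp [Finset.sum_boole, fiberCard]
  simp only [h1]
  rw [← Finset.sum_fiberwise univ F (fun x => (fiberCard p n m F (F x) : ℂ))]
  refine Finset.sum_congr rfl fun β _ => ?_
  rw [Finset.sum_congr rfl (fun x hx => by rw [(Finset.mem_filter.1 hx).2]),
    Finset.sum_const]
  simp [fiberCard, sq, mul_comm]

lemma sum_all_b (p n m : ℕ) [NeZero p] (F : (Fin n → ZMod p) → (Fin m → ZMod p)) :
    ∑ b : Fin m → ZMod p,
        (starRingEnd ℂ) (∑ x : Fin n → ZMod p, ZMod.stdAddChar (∑ i, b i * F x i)) *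
          (∑ x : Fin n → ZMod p, ZMod.stdAddChar (∑ i, b i * F x i))
      = ((p ^ m : ℕ) : ℂ) *
          ∑ x : Fin n → ZMod p, ∑ x' : Fin n → ZMod p, (if F x' = F x then (1:ℂ) else 0) := by
  classical
  have key : ∀ b : Fin m → ZMod p,
      (starRingEnd ℂ) (∑ x : Fin n → ZMod p, ZMod.stdAddChar (∑ i, b i * F x i)) *
          (∑ x : Fin n → ZMod p, ZMod.stdAddChar (∑ i, b i * F x i))
        = ∑ x : Fin n → ZMod p, ∑ x' : Fin n → ZMod p,
            ZMod.stdAddChar (∑ i, b i * (F x' i - F x i)) := by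
    intro b
    rw [map_sum, Finset.sum_mul_sum]
    refine Finset.sum_congr rfl fun x _ => Finset.sum_congr rfl fun x' _ => ?_
    rw [conj_stdAddChar, ← AddChar.map_add_eq_mul]
    congr 1
    rw [neg_add_eq_sub, ← Finset.sum_sub_distrib]
    refine Finset.sum_congr rfl fun i _ => ?_
    ring
  simp only [key]
  rw [Finset.sum_comm]
  rw [Finset.mul_sum]
  refine Finset.sum_congr rfl fun x _ => ?_
  rw [Finset.sum_comm, Finset.mul_sum]
  refine Finset.sum_congr rfl fun x' _ => ?_
  rw [sum_char_vec]
  have : ((fun i => F x' i - F x i) = 0) ↔ F x' = F x := by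
    simp [funext_iff, sub_eq_zero]
  split_ifs with h1 h2 <;> simp_all

lemma imbalance_eq (p n m : ℕ) [NeZero p] (F : (Fin n → ZMod p) → (Fin m → ZMod p)) :
    ((p:ℝ)^m) * imbalance p n m F
      = (p:ℝ)^m * (∑ β : Fin m → ZMod p, (fiberCard p n m F β : ℝ)^2) - ((p:ℝ)^n)^2 := by
  classical
  have hp0 : (0:ℝ) < (p:ℝ) := by
    have := Nat.pos_of_ne_zero (NeZero.ne p); exact_mod_cast this
  have hPne : ((p:ℝ)^m) ≠ 0 := by positivity
  rw [imbalance, ← mul_assoc, mul_inv_cancel₀ hPne, one_mul]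
  -- complex identity
  have hW0 : walsh p n m F 0 0 = ((p^n : ℕ) : ℂ) := by
    rw [walsh_zero_eq]
    simp [ZMod.card]
  have hsplit : ∑ b : Fin m → ZMod p,
        (starRingEnd ℂ) (walsh p n m F b 0) * walsh p n m F b 0
      = (∑ b ∈ univ.filter (fun b : Fin m → ZMod p => b ≠ 0),
          (starRingEnd ℂ) (walsh p n m F b 0) * walsh p n m F b 0)
        + (starRingEnd ℂ) (walsh p n m F 0 0) * walsh p n m F 0 0 := by
    rw [← Finset.sum_filter_add_sum_filter_not univ (fun b : Fin m → ZMod p => b ≠ 0)]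
    congr 1
    rw [show (univ.filter fun b : Fin m → ZMod p => ¬ b ≠ 0) = {0} from by ext b; simp,
      Finset.sum_singleton]
  have hall : ∑ b : Fin m → ZMod p,
        (starRingEnd ℂ) (walsh p n m F b 0) * walsh p n m F b 0
      = ((p ^ m : ℕ) : ℂ) * ∑ β : Fin m → ZMod p, (fiberCard p n m F β : ℂ) ^ 2 := by
    simp only [walsh_zero_eq]
    rw [sum_all_b, pairs_eq]
  have hC : ((∑ b ∈ univ.filter (fun b : Fin m → ZMod p => b ≠ 0),
        ‖walsh p n m F b 0‖ ^ 2 : ℝ) : ℂ)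
      = ((p:ℂ)^m * (∑ β : Fin m → ZMod p, (fiberCard p n m F β : ℂ)^2) - ((p:ℂ)^n)^2) := by
    push_cast
    have habs : ∀ b : Fin m → ZMod p,
        ((‖walsh p n m F b 0‖ : ℂ))^2
          = (starRingEnd ℂ) (walsh p n m F b 0) * walsh p n m F b 0 := by
      intro b
      rw [← Complex.normSq_eq_conj_mul_self]
      rw [← Complex.sq_norm]
      push_cast
      ring
    rw [Finset.sum_congr rfl fun b _ => habs b]
    have := hsplit.symm.trans hall
    rw [hW0] at this
    push_cast at this ⊢
    rw [show (starRingEnd ℂ) ((p:ℂ) ^ n) = (p:ℂ)^n from by simp [map_pow]] at this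
    linear_combination this
  have := hC
  rw [show ((p:ℂ)^m * (∑ β : Fin m → ZMod p, (fiberCard p n m F β : ℂ)^2) - ((p:ℂ)^n)^2)
      = (((p:ℝ)^m * (∑ β : Fin m → ZMod p, (fiberCard p n m F β : ℝ)^2) - ((p:ℝ)^n)^2 : ℝ) : ℂ)
      from by push_cast; ring] at this
  exact_mod_cast this

theorem fiberCard_bounds (p n m : ℕ) [NeZero p] (hp : p.Prime) (hn : 0 < n) (hm : 0 < m)
    (F : (Fin n → ZMod p) → (Fin m → ZMod p)) :
    (∀ β : Fin m → ZMod p,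
      (p : ℝ) ^ ((n : ℤ) - (m : ℤ)) - Real.sqrt ((1 - ((p : ℝ) ^ m)⁻¹) * imbalance p n m F)
        ≤ (fiberCard p n m F β : ℝ) ∧
      (fiberCard p n m F β : ℝ)
        ≤ (p : ℝ) ^ ((n : ℤ) - (m : ℤ)) + Real.sqrt ((1 - ((p : ℝ) ^ m)⁻¹) * imbalance p n m F)) ∧
    (∀ β : Fin m → ZMod p,
      ((fiberCard p n m F β : ℝ)
          = (p : ℝ) ^ ((n : ℤ) - (m : ℤ)) - Real.sqrt ((1 - ((p : ℝ) ^ m)⁻¹) * imbalance p n m F) ∨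
       (fiberCard p n m F β : ℝ)
          = (p : ℝ) ^ ((n : ℤ) - (m : ℤ)) + Real.sqrt ((1 - ((p : ℝ) ^ m)⁻¹) * imbalance p n m F)) →
      ∀ α : Fin m → ZMod p, α ≠ β →
        (fiberCard p n m F α : ℝ)
          = ((p : ℝ) ^ n - (fiberCard p n m F β : ℝ)) / ((p : ℝ) ^ m - 1)) := by
  classical
  have hp1 : (1:ℝ) < (p:ℝ) := by exact_mod_cast hp.one_lt
  have hp0 : (0:ℝ) < (p:ℝ) := lt_trans zero_lt_one hp1
  set Nt : (Fin m → ZMod p) → ℝ := fun γ => (fiberCard p n m F γ : ℝ) with hNt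
  set P : ℝ := (p:ℝ)^m with hPdef
  set Q : ℝ := (p:ℝ)^n with hQdef
  set S : ℝ := ∑ γ : Fin m → ZMod p, Nt γ ^ 2 with hSdef
  have hP1 : 1 < P := one_lt_pow₀ hp1 hm.ne'
  have hP0 : 0 < P := lt_trans zero_lt_one hP1
  have hQ0 : 0 < Q := pow_pos hp0 n
  have himb : P * imbalance p n m F = P * S - Q^2 := imbalance_eq p n m F
  have hc : (p : ℝ) ^ ((n : ℤ) - (m : ℤ)) = Q / P := by
    rw [zpow_sub₀ (ne_of_gt hp0), zpow_natCast, zpow_natCast, div_eq_div_iff] <;> positivity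
  have hsumN : ∑ γ : Fin m → ZMod p, Nt γ = Q := by
    have h0 : (univ : Finset (Fin n → ZMod p)).card
        = ∑ γ : Fin m → ZMod p, (univ.filter fun x => F x = γ).card :=
      Finset.card_eq_sum_card_fiberwise (fun x _ => mem_univ (F x))
    have h1 : (univ : Finset (Fin n → ZMod p)).card = p ^ n := by
      simp [ZMod.card]
    have h2 : ∑ γ : Fin m → ZMod p, fiberCard p n m F γ = p ^ n := by
      rw [← h1, h0]; rfl
    rw [hQdef, hNt]
    beta_reduce
    exact_mod_cast congrArg (Nat.cast : ℕ → ℝ) h2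
  have hcard : ∀ β : Fin m → ZMod p, ((univ.erase β).card : ℝ) = P - 1 := by
    intro β
    rw [Finset.card_erase_of_mem (mem_univ β)]
    have : Fintype.card (Fin m → ZMod p) = p ^ m := by simp [ZMod.card]
    rw [Finset.card_univ, this, Nat.cast_sub (Nat.one_le_iff_ne_zero.2 (pow_ne_zero m (NeZero.ne p)))]
    simp [hPdef]
  have hsum1 : ∀ β : Fin m → ZMod p, ∑ α ∈ univ.erase β, Nt α = Q - Nt β := by
    intro β
    have := Finset.sum_erase_add univ Nt (mem_univ β)
    rw [hsumN] at this; linarith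
  have hsum2 : ∀ β : Fin m → ZMod p, ∑ α ∈ univ.erase β, Nt α ^ 2 = S - Nt β ^ 2 := by
    intro β
    have := Finset.sum_erase_add univ (fun γ => Nt γ ^ 2) (mem_univ β)
    rw [← hSdef] at this; linarith [this]
  have hcs : ∀ β : Fin m → ZMod p, (Q - Nt β)^2 ≤ (P - 1) * (S - Nt β ^ 2) := by
    intro β
    have h3 := sq_sum_le_card_mul_sum_sq (s := univ.erase β) (f := Nt)
    rw [hsum1 β, hsum2 β] at h3
    calc (Q - Nt β)^2 ≤ ((univ.erase β).card : ℝ) * (S - Nt β ^ 2) := h3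
      _ = (P - 1) * (S - Nt β ^ 2) := by rw [hcard β]
  have hkey : ∀ β : Fin m → ZMod p,
      (Nt β - Q / P)^2 ≤ (1 - P⁻¹) * imbalance p n m F := by
    intro β
    have e1 : P^2 * ((Nt β - Q/P)^2) = (P * Nt β - Q)^2 := by
      field_simp
    have e2 : P^2 * ((1 - P⁻¹) * imbalance p n m F) = (P - 1) * (P * S - Q^2) := by
      rw [← himb]; field_simp
    have h4 : 0 ≤ P * ((P - 1) * (S - Nt β ^ 2) - (Q - Nt β)^2) :=
      mul_nonneg hP0.le (sub_nonneg.2 (hcs β))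
    have e3 : (P * Nt β - Q)^2 ≤ (P - 1) * (P * S - Q^2) := by nlinarith [h4]
    have := e3
    rw [← e1, ← e2] at this
    exact le_of_mul_le_mul_left this (by positivity)
  have hR0 : 0 ≤ (1 - P⁻¹) * imbalance p n m F :=
    le_trans (sq_nonneg _) (hkey 0)
  constructor
  · intro β
    have h := abs_le.1 (Real.abs_le_sqrt (hkey β))
    rw [hc]
    constructor <;> [linarith [h.1]; linarith [h.2]]
  · intro β hβ α hα
    have hsq : (Nt β - Q / P)^2 = (1 - P⁻¹) * imbalance p n m F := by
      rcases hβ with h | h <;> rw [hc] at h <;> rw [show Nt β = fiberCard p n m F β from rfl, h]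
      · rw [show Q / P - Real.sqrt ((1 - P⁻¹) * imbalance p n m F) - Q / P
            = -Real.sqrt ((1 - P⁻¹) * imbalance p n m F) from by ring, neg_sq,
          Real.sq_sqrt hR0]
      · rw [show Q / P + Real.sqrt ((1 - P⁻¹) * imbalance p n m F) - Q / P
            = Real.sqrt ((1 - P⁻¹) * imbalance p n m F) from by ring, Real.sq_sqrt hR0]
    -- transfer to equality in Cauchy-Schwarz
    have e1 : P^2 * ((Nt β - Q/P)^2) = (P * Nt β - Q)^2 := by field_simp
    have e2 : P^2 * ((1 - P⁻¹) * imbalance p n m F) = (P - 1) * (P * S - Q^2) := by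
      rw [← himb]; field_simp
    have e3 : (P * Nt β - Q)^2 = (P - 1) * (P * S - Q^2) := by
      rw [← e1, ← e2, hsq]
    have hz : P * ((P - 1) * (S - Nt β ^ 2) - (Q - Nt β)^2) = 0 := by
      linear_combination -e3
    have hcseq : (Q - Nt β)^2 = (P - 1) * (S - Nt β ^ 2) := by
      rcases mul_eq_zero.1 hz with h' | h'
      · exact absurd h' hP0.ne'
      · linarith
    -- variance argument on the erased set
    have hk : ((univ.erase β).card : ℝ) = P - 1 := hcard β
    have expand : ∑ γ ∈ univ.erase β, ((P - 1) * Nt γ - (Q - Nt β))^2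
        = (P - 1)^2 * (∑ γ ∈ univ.erase β, Nt γ ^ 2)
          - 2 * (P - 1) * (Q - Nt β) * (∑ γ ∈ univ.erase β, Nt γ)
          + ((univ.erase β).card : ℝ) * (Q - Nt β)^2 := by
      rw [Finset.sum_congr rfl (fun γ _ => by
        show ((P - 1) * Nt γ - (Q - Nt β))^2
          = (P - 1)^2 * Nt γ ^ 2 - 2 * (P - 1) * (Q - Nt β) * Nt γ + (Q - Nt β)^2
        ring)]
      rw [Finset.sum_add_distrib, Finset.sum_sub_distrib, ← Finset.mul_sum, ← Finset.mul_sum,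
        Finset.sum_const, nsmul_eq_mul]
    have hvar : ∑ γ ∈ univ.erase β, ((P - 1) * Nt γ - (Q - Nt β))^2 = 0 := by
      rw [expand, hsum1 β, hsum2 β, hk]
      linear_combination (1 - P) * hcseq
    have hterm := (Finset.sum_eq_zero_iff_of_nonneg
      (fun γ _ => sq_nonneg ((P - 1) * Nt γ - (Q - Nt β)))).1 hvar α
      (Finset.mem_erase.2 ⟨hα, mem_univ α⟩)
    have h5 : (P - 1) * Nt α - (Q - Nt β) = 0 := by
      exact pow_eq_zero_iff (n := 2) (by norm_num) |>.1 hterm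
    have hP1' : P - 1 ≠ 0 := by linarith
    rw [show (fiberCard p n m F α : ℝ) = Nt α from rfl,
      show ((p:ℝ)^n - (fiberCard p n m F β : ℝ)) / ((p:ℝ)^m - 1) = (Q - Nt β) / (P - 1) from rfl]
    field_simp
    linarith [h5]
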